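/- A complex irrational ζ ∈ ℂ \ ℚ(i) is badly approximable (there exists C > 0 with |ζ - p/q| > C/|q|² for all p, q ∈ ℤ[i], q ≠ 0) if and only if its Hurwitz continued fraction partial quotients (a_n)_{n≥0} are bounded. -/

import Mathlib

open Complex Filter

/-- `z` is a Gaussian integer (as a complex number). -/
def IsGaussianInt (z : ℂ) : Prop := ∃ m n : ℤ, z = (m : ℂ) + (n : ℂ) * I

/-- `z` belongs to `ℚ(i)`. -/
def IsGaussianRational (z : ℂ) : Prop :=
  ∃ p q : ℂ, IsGaussianInt p ∧ IsGaussianInt q ∧ q ≠ 0 ∧ z = p / q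

/-- The fundamental domain `𝔉`. -/
def InFund (z : ℂ) : Prop :=
  -(1/2) ≤ z.re ∧ z.re < 1/2 ∧ -(1/2) ≤ z.im ∧ z.im < 1/2

/-- Nearest Gaussian integer. -/
noncomputable def nearGauss (z : ℂ) : ℂ :=
  (⌊z.re + 1/2⌋ : ℤ) + (⌊z.im + 1/2⌋ : ℤ) * I

/-- Complete quotients of the Hurwitz continued fraction of `z`. -/
noncomputable def hcfZ (z : ℂ) : ℕ → ℂ
  | 0 => z
  | n + 1 => 1 / (hcfZ z n - nearGauss (hcfZ z n))

/-- Partial quotients of the Hurwitz continued fraction of `z`. -/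
noncomputable def hcfA (z : ℂ) (n : ℕ) : ℂ := nearGauss (hcfZ z n)

/-- Numerators: `hcfP z (n+2) = p n`, with `p (-2) = 0`, `p (-1) = 1`. -/
noncomputable def hcfP (z : ℂ) : ℕ → ℂ
  | 0 => 0
  | 1 => 1
  | n + 2 => hcfA z n * hcfP z (n + 1) + hcfP z n

/-- Denominators: `hcfQ z (n+2) = q n`, with `q (-2) = 1`, `q (-1) = 0`. -/
noncomputable def hcfQ (z : ℂ) : ℕ → ℂ
  | 0 => 1
  | 1 => 0
  | n + 2 => hcfA z n * hcfQ z (n + 1) + hcfQ z n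
/- ========== auxiliary development ========== -/


section Aux

lemma gi_zero : IsGaussianInt 0 := ⟨0, 0, by simp⟩

lemma gi_one : IsGaussianInt 1 := ⟨1, 0, by simp⟩

lemma gi_add {a b : ℂ} (ha : IsGaussianInt a) (hb : IsGaussianInt b) :
    IsGaussianInt (a + b) := by
  obtain ⟨m, n, rfl⟩ := ha
  obtain ⟨m', n', rfl⟩ := hb
  exact ⟨m + m', n + n', by push_cast; ring⟩

lemma gi_neg {a : ℂ} (ha : IsGaussianInt a) : IsGaussianInt (-a) := by
  obtain ⟨m, n, rfl⟩ := ha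
  exact ⟨-m, -n, by push_cast; ring⟩

lemma gi_sub {a b : ℂ} (ha : IsGaussianInt a) (hb : IsGaussianInt b) :
    IsGaussianInt (a - b) := by
  have := gi_add ha (gi_neg hb); simpa [sub_eq_add_neg] using this

lemma gi_mul {a b : ℂ} (ha : IsGaussianInt a) (hb : IsGaussianInt b) :
    IsGaussianInt (a * b) := by
  obtain ⟨m, n, rfl⟩ := ha
  obtain ⟨m', n', rfl⟩ := hb
  refine ⟨m * m' - n * n', m * n' + n * m', ?_⟩
  push_cast
  have h : (I : ℂ) * I = -1 := by
    simpa using Complex.I_mul_I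
  ring_nf
  rw [Complex.I_sq]
  ring

lemma gi_re_im {a : ℂ} (ha : IsGaussianInt a) :
    ∃ m n : ℤ, a.re = (m : ℝ) ∧ a.im = (n : ℝ) := by
  obtain ⟨m, n, rfl⟩ := ha
  exact ⟨m, n, by simp, by simp⟩

lemma gi_normSq_ge_one {a : ℂ} (ha : IsGaussianInt a) (h0 : a ≠ 0) :
    1 ≤ Complex.normSq a := by
  obtain ⟨m, n, hre, him⟩ := gi_re_im ha
  have hmn : ¬(m = 0 ∧ n = 0) := by
    rintro ⟨rfl, rfl⟩
    apply h0
    apply Complex.ext <;> simp [hre, him]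
  rw [Complex.normSq_apply, hre, him]
  rcases not_and_or.mp hmn with hm | hn
  · have : (1 : ℤ) ≤ |m| := Int.one_le_abs hm
    have h1 : (1 : ℝ) ≤ |(m : ℝ)| := by exact_mod_cast (by simpa using this)
    nlinarith [abs_nonneg (m : ℝ), _root_.sq_abs (m : ℝ), sq_nonneg (n : ℝ)]
  · have : (1 : ℤ) ≤ |n| := Int.one_le_abs hn
    have h1 : (1 : ℝ) ≤ |(n : ℝ)| := by exact_mod_cast (by simpa using this)
    nlinarith [abs_nonneg (n : ℝ), _root_.sq_abs (n : ℝ), sq_nonneg (m : ℝ)]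

lemma gi_abs_ge_one {a : ℂ} (ha : IsGaussianInt a) (h0 : a ≠ 0) :
    1 ≤ ‖a‖ := by
  have h := gi_normSq_ge_one ha h0
  rw [← Complex.sq_norm] at h
  nlinarith [norm_nonneg a]

end Aux
section Aux2

lemma gr_of_gi {a : ℂ} (ha : IsGaussianInt a) : IsGaussianRational a :=
  ⟨a, 1, ha, gi_one, one_ne_zero, by simp⟩

lemma ngr_ne_zero {z : ℂ} (h : ¬ IsGaussianRational z) : z ≠ 0 := by
  rintro rfl
  exact h (gr_of_gi gi_zero)

lemma ngr_sub_gi {z a : ℂ} (h : ¬ IsGaussianRational z) (ha : IsGaussianInt a) :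
    ¬ IsGaussianRational (z - a) := by
  rintro ⟨p, q, hp, hq, hq0, heq⟩
  refine h ⟨p + a * q, q, gi_add hp (gi_mul ha hq), hq, hq0, ?_⟩
  field_simp at heq ⊢
  linear_combination heq

lemma ngr_inv {z : ℂ} (h : ¬ IsGaussianRational z) :
    ¬ IsGaussianRational (1 / z) := by
  have hz : z ≠ 0 := ngr_ne_zero h
  rintro ⟨p, q, hp, hq, hq0, heq⟩
  have hp0 : p ≠ 0 := by
    rintro rfl
    rw [zero_div] at heq
    exact (one_div_ne_zero hz) heq
  refine h ⟨q, p, hq, hp, hp0, ?_⟩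
  field_simp at heq ⊢
  linear_combination -heq

lemma near_gi (z : ℂ) : IsGaussianInt (nearGauss z) := ⟨_, _, rfl⟩

lemma near_re_bound (z : ℂ) : |(z - nearGauss z).re| ≤ 1/2 := by
  have h1 : (⌊z.re + 1/2⌋ : ℝ) ≤ z.re + 1/2 := Int.floor_le _
  have h2 : z.re + 1/2 < (⌊z.re + 1/2⌋ : ℝ) + 1 := Int.lt_floor_add_one _
  have hre : (z - nearGauss z).re = z.re - (⌊z.re + 1/2⌋ : ℝ) := by
    simp [nearGauss, Complex.sub_re, Complex.add_re, Complex.mul_re]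
  rw [hre, abs_le]
  constructor <;> linarith

lemma near_im_bound (z : ℂ) : |(z - nearGauss z).im| ≤ 1/2 := by
  have h1 : (⌊z.im + 1/2⌋ : ℝ) ≤ z.im + 1/2 := Int.floor_le _
  have h2 : z.im + 1/2 < (⌊z.im + 1/2⌋ : ℝ) + 1 := Int.lt_floor_add_one _
  have him : (z - nearGauss z).im = z.im - (⌊z.im + 1/2⌋ : ℝ) := by
    simp [nearGauss, Complex.sub_im, Complex.add_im, Complex.mul_im]
  rw [him, abs_le]
  constructor <;> linarith

lemma near_normSq_le (z : ℂ) : Complex.normSq (z - nearGauss z) ≤ 1/2 := by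
  have h1 := near_re_bound z
  have h2 := near_im_bound z
  rw [Complex.normSq_apply]
  nlinarith [abs_nonneg (z - nearGauss z).re, abs_nonneg (z - nearGauss z).im,
    _root_.sq_abs (z - nearGauss z).re, _root_.sq_abs (z - nearGauss z).im]

lemma near_abs_le_one (z : ℂ) : ‖z - nearGauss z‖ ≤ 1 := by
  have h := near_normSq_le z
  rw [← Complex.sq_norm] at h
  nlinarith [norm_nonneg (z - nearGauss z)]

end Aux2

/- ===== z-chain lemmas, under irrationality ===== -/

section ZChain

variable {ζ : ℂ}

lemma hcfZ_ngr (hζ : ¬ IsGaussianRational ζ) : ∀ n, ¬ IsGaussianRational (hcfZ ζ n) := by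
  intro n
  induction n with
  | zero => exact hζ
  | succ n ih =>
    show ¬ IsGaussianRational (1 / (hcfZ ζ n - nearGauss (hcfZ ζ n)))
    exact ngr_inv (ngr_sub_gi ih (near_gi _))

lemma hcfZ_sub_ne (hζ : ¬ IsGaussianRational ζ) (n : ℕ) : hcfZ ζ n - hcfA ζ n ≠ 0 :=
  ngr_ne_zero (ngr_sub_gi (hcfZ_ngr hζ n) (near_gi _))

lemma hcfZ_ne (hζ : ¬ IsGaussianRational ζ) (n : ℕ) : hcfZ ζ n ≠ 0 := ngr_ne_zero (hcfZ_ngr hζ n)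

/-- `z_{n+1} (z_n - a_n) = 1`. -/
lemma hcfZ_step (hζ : ¬ IsGaussianRational ζ) (n : ℕ) : hcfZ ζ (n+1) * (hcfZ ζ n - hcfA ζ n) = 1 := by
  show (1 / (hcfZ ζ n - nearGauss (hcfZ ζ n))) * (hcfZ ζ n - hcfA ζ n) = 1
  rw [one_div]
  exact inv_mul_cancel₀ (hcfZ_sub_ne hζ n)

/-- `normSq z_{n+1} ≥ 2`. -/
lemma hcfZ_normSq_ge (hζ : ¬ IsGaussianRational ζ) (n : ℕ) : 2 ≤ Complex.normSq (hcfZ ζ (n+1)) := by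
  have hstep := hcfZ_step hζ n
  have h := congrArg Complex.normSq hstep
  rw [Complex.normSq_mul, Complex.normSq_one] at h
  have hu : Complex.normSq (hcfZ ζ n - hcfA ζ n) ≤ 1/2 := near_normSq_le _
  have hu0 : 0 < Complex.normSq (hcfZ ζ n - hcfA ζ n) := by
    rw [Complex.normSq_pos]; exact hcfZ_sub_ne hζ n
  nlinarith [Complex.normSq_nonneg (hcfZ ζ (n+1))]

lemma hcfZ_abs_sq_ge (hζ : ¬ IsGaussianRational ζ) (n : ℕ) : 2 ≤ ‖hcfZ ζ (n+1)‖ ^ 2 := by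
  rw [Complex.sq_norm]; exact hcfZ_normSq_ge hζ n

/-- the `G`-region fact: `|z_{n+1} - a| ≥ 1` for any unit Gaussian integer `a`. -/
lemma hcfZ_unit_dist (hζ : ¬ IsGaussianRational ζ) (n : ℕ) {a : ℂ} (ha : IsGaussianInt a)
    (hnorm : Complex.normSq a = 1) : 1 ≤ Complex.normSq (hcfZ ζ (n+1) - a) := by
  obtain ⟨m, k, hre, him⟩ := gi_re_im ha
  set u := hcfZ ζ n - hcfA ζ n with hu_def
  have hstep := hcfZ_step hζ n
  have hu0 : 0 < Complex.normSq u := by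
    rw [Complex.normSq_pos]; exact hcfZ_sub_ne hζ n
  -- (z' - a) * u = 1 - a * u
  have hkey : (hcfZ ζ (n+1) - a) * u = 1 - a * u := by
    have h1 : hcfZ ζ (n+1) * u = 1 := hstep
    linear_combination h1
  have hns := congrArg Complex.normSq hkey
  rw [Complex.normSq_mul] at hns
  -- normSq (1 - a*u) = 1 - 2*Re(a*u) + normSq a * normSq u
  have hx : |u.re| ≤ 1/2 := near_re_bound _
  have hy : |u.im| ≤ 1/2 := near_im_bound _
  -- Re (a * u) ≤ 1/2, using m = 0 or k = 0
  have hmk : m = 0 ∨ k = 0 := by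
    by_contra hcon
    push_neg at hcon
    obtain ⟨hm, hk⟩ := hcon
    have h1 : (1:ℤ) ≤ |m| := Int.one_le_abs hm
    have h2 : (1:ℤ) ≤ |k| := Int.one_le_abs hk
    have h1' : (1:ℝ) ≤ |(m:ℝ)| := by exact_mod_cast (by simpa using h1)
    have h2' : (1:ℝ) ≤ |(k:ℝ)| := by exact_mod_cast (by simpa using h2)
    rw [Complex.normSq_apply, hre, him] at hnorm
    nlinarith [_root_.sq_abs (m:ℝ), _root_.sq_abs (k:ℝ), abs_nonneg (m:ℝ), abs_nonneg (k:ℝ)]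
  have hRe : (a * u).re ≤ 1/2 := by
    rw [Complex.mul_re, hre, him]
    rcases hmk with rfl | rfl
    · rw [Complex.normSq_apply, hre, him] at hnorm
      push_cast at hnorm ⊢
      have hk1 : |(k:ℝ)| = 1 := by
        nlinarith [_root_.sq_abs (k:ℝ), abs_nonneg (k:ℝ)]
      have : -((k:ℝ) * u.im) ≤ |(k:ℝ) * u.im| := neg_le_abs _
      rw [abs_mul, hk1, one_mul] at this
      linarith
    · rw [Complex.normSq_apply, hre, him] at hnorm
      push_cast at hnorm ⊢
      have hm1 : |(m:ℝ)| = 1 := by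
        nlinarith [_root_.sq_abs (m:ℝ), abs_nonneg (m:ℝ)]
      have : (m:ℝ) * u.re ≤ |(m:ℝ) * u.re| := le_abs_self _
      rw [abs_mul, hm1, one_mul] at this
      linarith
  -- normSq(1 - a u) - normSq u = 1 - 2 Re(a u) + (normSq a - 1) normSq u ≥ 0
  have hexp : Complex.normSq (1 - a * u) =
      1 - 2 * (a * u).re + Complex.normSq a * Complex.normSq u := by
    rw [Complex.normSq_apply, Complex.normSq_apply, Complex.normSq_apply]
    simp [Complex.sub_re, Complex.sub_im, Complex.mul_re, Complex.mul_im]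
    ring
  rw [hexp, hnorm] at hns
  -- hns : normSq(z'-a) * normSq u = 1 - 2 Re(au) + normSq u
  nlinarith [Complex.normSq_nonneg (hcfZ ζ (n+1) - a)]

end ZChain
section PQChain

variable {ζ : ℂ}

lemma hcfA_gi (n : ℕ) : IsGaussianInt (hcfA ζ n) := near_gi _

/-- `normSq a_n ≥ 2` for `n ≥ 1`. -/
lemma hcfA_normSq_ge (hζ : ¬ IsGaussianRational ζ) (n : ℕ) :
    2 ≤ Complex.normSq (hcfA ζ (n+1)) := by
  set a := hcfA ζ (n+1) with ha_def
  have hgi : IsGaussianInt a := hcfA_gi _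
  obtain ⟨m, k, hre, him⟩ := gi_re_im hgi
  have hu : Complex.normSq (hcfZ ζ (n+1) - a) ≤ 1/2 := near_normSq_le _
  have hz : 2 ≤ Complex.normSq (hcfZ ζ (n+1)) := hcfZ_normSq_ge hζ n
  -- a ≠ 0
  have ha0 : a ≠ 0 := by
    rintro h0
    rw [h0, sub_zero] at hu
    linarith
  have h1 : 1 ≤ Complex.normSq a := gi_normSq_ge_one hgi ha0
  -- normSq a is an integer value; exclude normSq a = 1
  rcases eq_or_lt_of_le h1 with heq | hlt
  · exfalso
    have := hcfZ_unit_dist hζ n hgi heq.symm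
    linarith
  · -- normSq a = m² + k² > 1 with integers → ≥ 2
    rw [Complex.normSq_apply, hre, him] at hlt ⊢
    have hint : (1:ℤ) < m*m + k*k := by exact_mod_cast hlt
    have h2 : (2:ℤ) ≤ m*m + k*k := hint
    have h2' : (2:ℝ) ≤ (m:ℝ)*(m:ℝ) + (k:ℝ)*(k:ℝ) := by exact_mod_cast h2
    linarith

lemma hcfP_gi (n : ℕ) : IsGaussianInt (hcfP ζ n) ∧ IsGaussianInt (hcfQ ζ n) := by
  induction n using Nat.strong_induction_on with
  | _ n ih =>
    match n with
    | 0 => exact ⟨gi_zero, gi_one⟩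
    | 1 => exact ⟨gi_one, gi_zero⟩
    | (k+2) =>
      have h1 := ih (k+1) (by omega)
      have h0 := ih k (by omega)
      exact ⟨gi_add (gi_mul (hcfA_gi k) h1.1) h0.1,
             gi_add (gi_mul (hcfA_gi k) h1.2) h0.2⟩

end PQChain

/- ===== λ and e ===== -/

noncomputable def hcfL (z : ℂ) (n : ℕ) : ℂ := hcfQ z n * z - hcfP z n

noncomputable def hcfE (z : ℂ) (n : ℕ) : ℂ := (-1)^n * (hcfQ z (n+1) * hcfL z n)

section Lam

variable {ζ : ℂ}

lemma hcfL_zero : hcfL ζ 0 = ζ := by simp [hcfL, hcfQ, hcfP]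

lemma hcfL_one : hcfL ζ 1 = -1 := by simp [hcfL, hcfQ, hcfP]

lemma hcfQ_rec (n : ℕ) : hcfQ ζ (n+2) = hcfA ζ n * hcfQ ζ (n + 1) + hcfQ ζ n := rfl

lemma hcfP_rec (n : ℕ) : hcfP ζ (n+2) = hcfA ζ n * hcfP ζ (n + 1) + hcfP ζ n := rfl

lemma hcfL_rec (n : ℕ) : hcfL ζ (n+2) = hcfA ζ n * hcfL ζ (n + 1) + hcfL ζ n := by
  simp only [hcfL, hcfQ_rec, hcfP_rec]; ring

/-- `λ_{n+1} z_n = -λ_n`. -/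
lemma hcfL_step (hζ : ¬ IsGaussianRational ζ) (n : ℕ) :
    hcfL ζ (n+1) * hcfZ ζ n = - hcfL ζ n := by
  induction n with
  | zero => simp [hcfL_zero, hcfL_one, hcfZ]
  | succ n ih =>
    have hz := hcfZ_step hζ n
    rw [hcfL_rec]
    linear_combination hcfZ ζ (n+1) * ih + (- hcfL ζ (n+1)) * hz

lemma hcfL_ne (hζ : ¬ IsGaussianRational ζ) (n : ℕ) : hcfL ζ n ≠ 0 := by
  induction n with
  | zero => rw [hcfL_zero]; exact ngr_ne_zero hζ
  | succ n ih =>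
    intro h0
    have := hcfL_step hζ n
    rw [h0, zero_mul] at this
    exact ih (neg_eq_zero.mp this.symm)

/-- determinant identity. -/
lemma hcfL_det (n : ℕ) :
    hcfQ ζ (n+1) * hcfL ζ n - hcfQ ζ n * hcfL ζ (n+1) = (-1)^n := by
  induction n with
  | zero => simp [hcfL_zero, hcfL_one, hcfQ]
  | succ n ih =>
    rw [hcfL_rec, hcfQ_rec]
    rw [pow_succ]
    linear_combination (-1 : ℂ) * ih

/-- the key recursion: `e_{n+1} (z_n z_{n+1}) = z_n z_{n+1} - e_n`. -/
lemma hcfE_rec (hζ : ¬ IsGaussianRational ζ) (n : ℕ) :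
    hcfE ζ (n+1) * (hcfZ ζ n * hcfZ ζ (n+1)) = hcfZ ζ n * hcfZ ζ (n+1) - hcfE ζ n := by
  have hdet := hcfL_det (ζ := ζ) (n+1)
  have h1 := hcfL_step hζ (n+1)
  have h2 := hcfL_step hζ n
  simp only [hcfE]
  rw [pow_succ] at hdet ⊢
  have hs2 : ((-1:ℂ))^n * ((-1:ℂ))^n = 1 := by
    rw [← pow_add]
    have h2n : n + n = 2 * n := by ring
    rw [h2n, pow_mul]
    norm_num
  linear_combination (hcfZ ζ n * hcfZ ζ (n+1)) * hs2 + (-((-1:ℂ)^n) * (hcfZ ζ n * hcfZ ζ (n+1))) * hdet +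
    (-((-1:ℂ)^n) * hcfQ ζ (n+1) * hcfZ ζ n) * h1 + (((-1:ℂ)^n) * hcfQ ζ (n+1)) * h2

lemma hcfE_one : hcfE ζ 1 = 1 := by
  simp [hcfE, hcfL_one, hcfQ, hcfP, hcfA]

end Lam
section Estimates

variable {ζ : ℂ}

/-- `z_n z_{n+1} - 1 = a_n z_{n+1}`. -/
lemma hcfZ_prod_sub_one (hζ : ¬ IsGaussianRational ζ) (n : ℕ) :
    hcfZ ζ n * hcfZ ζ (n+1) - 1 = hcfA ζ n * hcfZ ζ (n+1) := by
  have h := hcfZ_step hζ n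
  linear_combination h

lemma abs_sq_of_normSq {w : ℂ} (h : 2 ≤ Complex.normSq w) : 2 ≤ ‖w‖ ^ 2 := by
  rw [Complex.sq_norm]; exact h

lemma two_le_mul_of_sq {x y : ℝ} (hx : 0 ≤ x) (hy : 0 ≤ y)
    (hx2 : 2 ≤ x^2) (hy2 : 2 ≤ y^2) : 2 ≤ x * y := by
  nlinarith [sq_nonneg (x - y), sq_nonneg (x*y - 2), mul_nonneg hx hy]

/-- `|z_{m+1}| * |z_{n+1}| ≥ 2`. -/
lemma abs_zz_ge (hζ : ¬ IsGaussianRational ζ) (m n : ℕ) :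
    2 ≤ ‖hcfZ ζ (m+1)‖ * ‖hcfZ ζ (n+1)‖ :=
  two_le_mul_of_sq (norm_nonneg _) (norm_nonneg _)
    (abs_sq_of_normSq (hcfZ_normSq_ge hζ m)) (abs_sq_of_normSq (hcfZ_normSq_ge hζ n))

/-- `|a_{m+1}| * |z_{n+1}| ≥ 2`. -/
lemma abs_az_ge (hζ : ¬ IsGaussianRational ζ) (m n : ℕ) :
    2 ≤ ‖hcfA ζ (m+1)‖ * ‖hcfZ ζ (n+1)‖ :=
  two_le_mul_of_sq (norm_nonneg _) (norm_nonneg _)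
    (abs_sq_of_normSq (hcfA_normSq_ge hζ m)) (abs_sq_of_normSq (hcfZ_normSq_ge hζ n))

/-- upper bound `|e_{n+1}| ≤ 2`. -/
lemma hcfE_le_two (hζ : ¬ IsGaussianRational ζ) (n : ℕ) :
    ‖hcfE ζ (n+1)‖ ≤ 2 := by
  induction n with
  | zero => rw [hcfE_one]; norm_num
  | succ n ih =>
    have hrec : hcfE ζ (n+2) * (hcfZ ζ (n+1) * hcfZ ζ (n+2)) =
        hcfZ ζ (n+1) * hcfZ ζ (n+2) - hcfE ζ (n+1) := hcfE_rec hζ (n+1)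
    have hA : 2 ≤ ‖hcfZ ζ (n+1)‖ * ‖hcfZ ζ (n+2)‖ :=
      abs_zz_ge hζ n (n+1)
    have h1 := congrArg norm hrec
    rw [norm_mul, norm_mul] at h1
    have h2 : ‖hcfZ ζ (n+1) * hcfZ ζ (n+2) - hcfE ζ (n+1)‖ ≤
        ‖hcfZ ζ (n+1)‖ * ‖hcfZ ζ (n+2)‖ + 2 := by
      calc ‖hcfZ ζ (n+1) * hcfZ ζ (n+2) - hcfE ζ (n+1)‖ ≤
          ‖hcfZ ζ (n+1) * hcfZ ζ (n+2)‖ + ‖hcfE ζ (n+1)‖ :=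
            norm_sub_le _ _
        _ ≤ _ := by rw [norm_mul]; linarith
    rw [← h1] at h2
    nlinarith [norm_nonneg (hcfE ζ (n+2))]

/-- `|1 - e_{n+1}| ≤ 1`. -/
lemma hcfE_one_sub_le (hζ : ¬ IsGaussianRational ζ) (n : ℕ) :
    ‖1 - hcfE ζ (n+1)‖ ≤ 1 := by
  cases n with
  | zero => rw [hcfE_one]; simp
  | succ n =>
    have hrec : hcfE ζ (n+2) * (hcfZ ζ (n+1) * hcfZ ζ (n+2)) =
        hcfZ ζ (n+1) * hcfZ ζ (n+2) - hcfE ζ (n+1) := hcfE_rec hζ (n+1)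
    have hA : 2 ≤ ‖hcfZ ζ (n+1)‖ * ‖hcfZ ζ (n+2)‖ :=
      abs_zz_ge hζ n (n+1)
    have he : ‖hcfE ζ (n+1)‖ ≤ 2 := hcfE_le_two hζ n
    have hkey : (1 - hcfE ζ (n+2)) * (hcfZ ζ (n+1) * hcfZ ζ (n+2)) = hcfE ζ (n+1) := by
      linear_combination -hrec
    have h1 := congrArg norm hkey
    rw [norm_mul, norm_mul] at h1
    nlinarith [norm_nonneg (1 - hcfE ζ (n+2))]

/-- lower bound `1/3 ≤ |e_{n+1}|`. -/
lemma hcfE_ge_third (hζ : ¬ IsGaussianRational ζ) (n : ℕ) :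
    1/3 ≤ ‖hcfE ζ (n+1)‖ := by
  cases n with
  | zero => rw [hcfE_one]; norm_num
  | succ n =>
    by_contra hcon0
    push_neg at hcon0
    have hcon : ‖hcfE ζ (n+2)‖ < 1/3 := hcon0
    have hrec : hcfE ζ (n+2) * (hcfZ ζ (n+1) * hcfZ ζ (n+2)) =
        hcfZ ζ (n+1) * hcfZ ζ (n+2) - hcfE ζ (n+1) := hcfE_rec hζ (n+1)
    have hA1 : 2 ≤ ‖hcfZ ζ (n+1) * hcfZ ζ (n+2) - 1‖ := by
      rw [hcfZ_prod_sub_one hζ (n+1), norm_mul]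
      exact abs_az_ge hζ n (n+1)
    have he1 : ‖hcfE ζ (n+1)‖ ≤ 2 := hcfE_le_two hζ n
    have he1' : ‖1 - hcfE ζ (n+1)‖ ≤ 1 := hcfE_one_sub_le hζ n
    -- e_{n+1} = A * (1 - e_{n+2})
    have hkey : hcfE ζ (n+1) = (hcfZ ζ (n+1) * hcfZ ζ (n+2)) * (1 - hcfE ζ (n+2)) := by
      linear_combination hrec
    have heq1 := congrArg norm hkey
    rw [norm_mul] at heq1
    -- |1 - e_{n+2}| ≥ 1 - |e_{n+2}|
    have hone : (1 : ℝ) ≤ ‖1 - hcfE ζ (n+2)‖ + ‖hcfE ζ (n+2)‖ := by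
      have h := norm_add_le (1 - hcfE ζ (n+2)) (hcfE ζ (n+2))
      simpa using h
    -- A - 1 = e_{n+2} * A - (1 - e_{n+1})
    have hkey2 : hcfZ ζ (n+1) * hcfZ ζ (n+2) - 1 =
        hcfE ζ (n+2) * (hcfZ ζ (n+1) * hcfZ ζ (n+2)) - (1 - hcfE ζ (n+1)) := by
      linear_combination -hrec
    have h2 : ‖hcfZ ζ (n+1) * hcfZ ζ (n+2) - 1‖ ≤
        ‖hcfE ζ (n+2)‖ * ‖hcfZ ζ (n+1) * hcfZ ζ (n+2)‖ + 1 := by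
      rw [hkey2]
      calc ‖hcfE ζ (n+2) * (hcfZ ζ (n+1) * hcfZ ζ (n+2)) - (1 - hcfE ζ (n+1))‖ ≤
          ‖hcfE ζ (n+2) * (hcfZ ζ (n+1) * hcfZ ζ (n+2))‖ +
            ‖1 - hcfE ζ (n+1)‖ :=
            norm_sub_le _ _
        _ ≤ _ := by rw [norm_mul]; linarith
    -- now pure real arithmetic
    set x : ℝ := ‖hcfE ζ (n+2)‖ with hx_def
    set aA : ℝ := ‖hcfZ ζ (n+1) * hcfZ ζ (n+2)‖ with haA_def
    set b : ℝ := ‖1 - hcfE ζ (n+2)‖ with hb_def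
    have hx0 : 0 ≤ x := norm_nonneg _
    have haA0 : 0 ≤ aA := norm_nonneg _
    have hb0 : 0 ≤ b := norm_nonneg _
    have hxA : 1 ≤ x * aA := by nlinarith
    have haApos : 0 < aA := by nlinarith
    have haA3 : aA ≤ 3 := by nlinarith [mul_le_mul_of_nonneg_left hcon.le haA0]
    have : x * aA < 1 := by nlinarith [mul_lt_mul_of_pos_left hcon haApos]
    linarith

end Estimates
section Final

variable {ζ : ℂ}

lemma gi_neg_one_pow (n : ℕ) : IsGaussianInt ((-1 : ℂ)^n) := by
  induction n with
  | zero => simpa using gi_one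
  | succ n ih => rw [pow_succ, mul_neg_one]; exact gi_neg ih

lemma abs_neg_one_pow_mul (n : ℕ) (x : ℂ) :
    ‖(-1 : ℂ)^n * x‖ = ‖x‖ := by
  rw [norm_mul, norm_pow]
  simp

/-- `|e_n| = |Q_{n+1}| |L_n|`. -/
lemma abs_hcfE (n : ℕ) :
    ‖hcfE ζ n‖ = ‖hcfQ ζ (n+1)‖ * ‖hcfL ζ n‖ := by
  rw [hcfE, abs_neg_one_pow_mul, norm_mul]

lemma hcfQ_ne (hζ : ¬ IsGaussianRational ζ) (n : ℕ) : hcfQ ζ (n+2) ≠ 0 := by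
  intro h0
  have h := hcfE_ge_third hζ n
  rw [abs_hcfE, h0] at h
  simp at h
  linarith

/-- `|L_{n+1}| |z_n| = |L_n|`. -/
lemma abs_hcfL_step (hζ : ¬ IsGaussianRational ζ) (n : ℕ) :
    ‖hcfL ζ (n+1)‖ * ‖hcfZ ζ n‖ = ‖hcfL ζ n‖ := by
  have h := congrArg norm (hcfL_step hζ n)
  rw [norm_mul, norm_neg] at h
  exact h

/-- `|z_n| ≤ |a_n| + 1`. -/
lemma abs_hcfZ_le (n : ℕ) :
    ‖hcfZ ζ n‖ ≤ ‖hcfA ζ n‖ + 1 := by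
  have h1 : ‖hcfZ ζ n - hcfA ζ n‖ ≤ 1 := near_abs_le_one _
  have h2 : ‖hcfZ ζ n‖ ≤
      ‖hcfA ζ n‖ + ‖hcfZ ζ n - hcfA ζ n‖ := by
    have h3 := norm_add_le (hcfA ζ n) (hcfZ ζ n - hcfA ζ n)
    simpa using h3
  linarith

/-- `|a_n| ≤ |z_n| + 1`. -/
lemma abs_hcfA_le (n : ℕ) :
    ‖hcfA ζ n‖ ≤ ‖hcfZ ζ n‖ + 1 := by
  have h1 : ‖hcfZ ζ n - hcfA ζ n‖ ≤ 1 := near_abs_le_one _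
  have h2 : ‖hcfA ζ n‖ ≤
      ‖hcfZ ζ n‖ + ‖hcfZ ζ n - hcfA ζ n‖ := by
    have h3 := norm_sub_le (hcfZ ζ n) (hcfZ ζ n - hcfA ζ n)
    simpa using h3
  linarith

/-- two-step decay of λ. -/
lemma abs_hcfL_decay (hζ : ¬ IsGaussianRational ζ) (n : ℕ) :
    ‖hcfL ζ (n+3)‖ * 2 ≤ ‖hcfL ζ (n+1)‖ := by
  have h1 := abs_hcfL_step hζ (n+2)
  have h2 := abs_hcfL_step hζ (n+1)
  have hzz : 2 ≤ ‖hcfZ ζ (n+2)‖ * ‖hcfZ ζ (n+1)‖ := by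
    have := abs_zz_ge hζ (n+1) n
    linarith [this]
  nlinarith [norm_nonneg (hcfL ζ (n+3)), norm_nonneg (hcfL ζ (n+2)),
    norm_nonneg (hcfZ ζ (n+2)), norm_nonneg (hcfZ ζ (n+1))]

lemma abs_hcfL_odd (hζ : ¬ IsGaussianRational ζ) (k : ℕ) :
    ‖hcfL ζ (2*k+1)‖ ≤ (1/2 : ℝ)^k := by
  induction k with
  | zero => simp [hcfL_one]
  | succ k ih =>
    have h := abs_hcfL_decay hζ (2*k)
    have heq : 2*(k+1)+1 = 2*k+3 := by ring
    rw [heq]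
    rw [pow_succ]
    nlinarith [norm_nonneg (hcfL ζ (2*k+3))]

lemma hcfL_small (hζ : ¬ IsGaussianRational ζ) {ε : ℝ} (hε : 0 < ε) :
    ∃ m : ℕ, 1 ≤ m ∧ ‖hcfL ζ (m+1)‖ ≤ ε := by
  obtain ⟨k, hk⟩ := exists_pow_lt_of_lt_one hε (by norm_num : (1/2:ℝ) < 1)
  refine ⟨2*k+2, by omega, ?_⟩
  have h1 : ‖hcfL ζ (2*(k+1)+1)‖ ≤ (1/2:ℝ)^(k+1) := abs_hcfL_odd hζ (k+1)
  have heq : 2*(k+1)+1 = 2*k+2+1 := by ring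
  rw [heq] at h1
  have h2 : ((1:ℝ)/2)^(k+1) ≤ (1/2:ℝ)^k := by
    rw [pow_succ]
    nlinarith [pow_nonneg (by norm_num : (0:ℝ) ≤ 1/2) k]
  linarith

lemma detPQ (n : ℕ) :
    hcfQ ζ n * hcfP ζ (n+1) - hcfQ ζ (n+1) * hcfP ζ n = (-1)^n := by
  have h := hcfL_det (ζ := ζ) n
  simp only [hcfL] at h
  linear_combination h

end Final
section Directions

variable {ζ : ℂ}

lemma neg_one_pow_mul_self (n : ℕ) : ((-1:ℂ))^n * ((-1:ℂ))^n = 1 := by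
  rw [← pow_add]
  have h2n : n + n = 2 * n := by ring
  rw [h2n, pow_mul]
  norm_num

/-- FORWARD: badly approximable implies bounded quotients. -/
lemma forward_dir (hζ : ¬ IsGaussianRational ζ) (C : ℝ) (hC : 0 < C)
    (hbad : ∀ p q : ℂ, IsGaussianInt p → IsGaussianInt q → q ≠ 0 →
      C / ‖q‖ ^ 2 < ‖ζ - p / q‖) :
    ∀ n, ‖hcfA ζ n‖ ≤ max (‖hcfA ζ 0‖) (2/C + 1) := by
  intro n
  cases n with
  | zero => exact le_max_left _ _
  | succ n =>
    refine le_trans ?_ (le_max_right _ _)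
    have hq : hcfQ ζ (n+2) ≠ 0 := hcfQ_ne hζ n
    have hgiP := (hcfP_gi (ζ := ζ) (n+2)).1
    have hgiQ := (hcfP_gi (ζ := ζ) (n+2)).2
    have hb := hbad _ _ hgiP hgiQ hq
    have haq : 0 < ‖hcfQ ζ (n+2)‖ := norm_pos_iff.mpr hq
    have hdiv : ζ - hcfP ζ (n+2) / hcfQ ζ (n+2) = hcfL ζ (n+2) / hcfQ ζ (n+2) := by
      rw [hcfL]
      field_simp
    rw [hdiv, norm_div] at hb
    -- C < |L_{n+2}| |Q_{n+2}|
    have hkey : C < ‖hcfL ζ (n+2)‖ * ‖hcfQ ζ (n+2)‖ := by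
      rw [div_lt_div_iff₀ (by positivity) haq] at hb
      nlinarith
    -- |z_{n+1}| * C < 2
    have hstep := abs_hcfL_step hζ (n+1)
    have he : ‖hcfQ ζ (n+2)‖ * ‖hcfL ζ (n+1)‖ ≤ 2 := by
      rw [← abs_hcfE]
      exact hcfE_le_two hζ n
    have hz2 : ‖hcfZ ζ (n+1)‖ * C ≤ 2 := by
      nlinarith [norm_nonneg (hcfZ ζ (n+1)), norm_nonneg (hcfL ζ (n+2)),
        norm_nonneg (hcfQ ζ (n+2))]
    have hA := abs_hcfA_le (ζ := ζ) (n+1)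
    have hzC : ‖hcfZ ζ (n+1)‖ ≤ 2 / C := by
      rw [le_div_iff₀ hC]; linarith
    linarith

set_option maxHeartbeats 1600000 in
/-- REVERSE: bounded quotients implies badly approximable. -/
lemma reverse_dir (hζ : ¬ IsGaussianRational ζ) (M : ℝ)
    (hM : ∀ n, ‖hcfA ζ n‖ ≤ M) :
    ∀ p q : ℂ, IsGaussianInt p → IsGaussianInt q → q ≠ 0 →
      (1/(32*(M+1))) / ‖q‖ ^ 2 < ‖ζ - p / q‖ := by
  have hM0 : 0 ≤ M := le_trans (norm_nonneg _) (hM 0)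
  set K : ℝ := M + 1 with hK_def
  have hK1 : 1 ≤ K := by simp [hK_def]; linarith
  have hKpos : 0 < K := by linarith
  intro p q hp hq hq0
  set aq : ℝ := ‖q‖ with haq_def
  have haq : 0 < aq := norm_pos_iff.mpr hq0
  have hq1 : 1 ≤ aq := gi_abs_ge_one hq hq0
  -- |z| ≤ K everywhere
  have hzle : ∀ k, ‖hcfZ ζ k‖ ≤ K := by
    intro k
    have := abs_hcfZ_le (ζ := ζ) k
    have := hM k
    simp only [hK_def]
    linarith
  -- the distance in question
  set A : ℝ := ‖q * ζ - p‖ with hA_def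
  have hA0 : 0 ≤ A := norm_nonneg _
  have hdiv : ζ - p / q = (q * ζ - p)/q := by field_simp
  rw [hdiv, norm_div, ← hA_def, ← haq_def]
  -- reduce the goal to `1 < A * (32 * K * aq)`
  suffices hfin : 1 < A * (32 * K * aq) by
    rw [div_lt_div_iff₀ (by positivity) haq]
    have hc : (0:ℝ) < 1/(32*K) := by positivity
    have hX : aq < 32*K*(A*aq^2) := by nlinarith [mul_lt_mul_of_pos_right hfin haq]
    calc (1/(32*K)) * aq < (1/(32*K)) * (32*K*(A*aq^2)) := by
          exact mul_lt_mul_of_pos_left hX hc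
      _ = A * aq^2 := by field_simp
  -- main case analysis
  by_cases hcase : 1 < A * (16 * aq)
  · nlinarith
  · push_neg at hcase
    -- pick minimal index n ≥ 1 with |L_{n+1}| ≤ 1/(4 aq)
    classical
    have hex : ∃ m : ℕ, 1 ≤ m ∧ ‖hcfL ζ (m+1)‖ ≤ 1/(4*aq) :=
      hcfL_small hζ (by positivity)
    set n : ℕ := Nat.find hex with hn_def
    obtain ⟨hn1, hLn1⟩ : 1 ≤ n ∧ ‖hcfL ζ (n+1)‖ ≤ 1/(4*aq) := Nat.find_spec hex
    have hLn : 1/(4*aq) < ‖hcfL ζ n‖ := by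
      rcases Nat.lt_or_ge n 2 with h2 | h2
      · have hne : n = 1 := by omega
        rw [hne, hcfL_one]
        rw [show ((-1 : ℂ)) = 0 - 1 by ring]
        rw [norm_sub_rev, sub_zero, norm_one]
        rw [div_lt_iff₀ (by positivity)]
        nlinarith
      · have hna := Nat.find_min hex (m := n - 1) (by omega)
        have h3 : ¬ (‖hcfL ζ (n-1+1)‖ ≤ 1/(4*aq)) := fun hc => hna ⟨by omega, hc⟩
        push_neg at h3
        have heq : n - 1 + 1 = n := by omega
        rw [heq] at h3
        linarith
    obtain ⟨m, hm⟩ : ∃ m, n = m + 1 := ⟨n - 1, by omega⟩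
    rw [hm] at hLn hLn1
    -- |Q_{m+2}| ≤ 8 aq
    have hQL : ‖hcfQ ζ (m+2)‖ * ‖hcfL ζ (m+1)‖ ≤ 2 := by
      rw [← abs_hcfE]
      exact hcfE_le_two hζ m
    have hLn' : 1 < 4 * aq * ‖hcfL ζ (m+1)‖ := by
      rw [div_lt_iff₀ (by positivity)] at hLn
      nlinarith
    have hQ8 : ‖hcfQ ζ (m+2)‖ ≤ 8 * aq := by
      nlinarith [mul_le_mul_of_nonneg_left hLn'.le (norm_nonneg (hcfQ ζ (m+2))),
        mul_le_mul_of_nonneg_left hQL (by positivity : (0:ℝ) ≤ 4*aq)]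
    -- determinant-based decomposition
    have hdet := detPQ (ζ := ζ) (m+1)
    have hs2 := neg_one_pow_mul_self (m+1)
    have hqid : ((-1:ℂ)^(m+1) * (p * hcfQ ζ (m+1) - q * hcfP ζ (m+1))) * hcfQ ζ (m+2) +
        ((-1:ℂ)^(m+1) * (q * hcfP ζ (m+2) - p * hcfQ ζ (m+2))) * hcfQ ζ (m+1) = q := by
      linear_combination ((-1:ℂ)^(m+1) * q) * hdet + q * hs2
    have hlin : ((-1:ℂ)^(m+1) * (p * hcfQ ζ (m+1) - q * hcfP ζ (m+1))) * hcfL ζ (m+2) +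
        ((-1:ℂ)^(m+1) * (q * hcfP ζ (m+2) - p * hcfQ ζ (m+2))) * hcfL ζ (m+1) =
          q * ζ - p := by
      simp only [hcfL]
      linear_combination ((-1:ℂ)^(m+1) * (q * ζ - p)) * hdet + (q * ζ - p) * hs2
    set α : ℂ := (-1:ℂ)^(m+1) * (p * hcfQ ζ (m+1) - q * hcfP ζ (m+1)) with hα_def
    set β : ℂ := (-1:ℂ)^(m+1) * (q * hcfP ζ (m+2) - p * hcfQ ζ (m+2)) with hβ_def
    -- β is a Gaussian integer with |β| < 1, hence zero
    have hβgi : IsGaussianInt β := by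
      rw [hβ_def]
      exact gi_mul (gi_neg_one_pow _)
        (gi_sub (gi_mul hq (hcfP_gi (ζ := ζ) (m+2)).1) (gi_mul hp (hcfP_gi (ζ := ζ) (m+2)).2))
    have hβeq : β = (-1:ℂ)^(m+1) * (hcfQ ζ (m+2) * (q * ζ - p) - q * hcfL ζ (m+2)) := by
      rw [hβ_def]
      simp only [hcfL]
      ring
    have hβabs : ‖β‖ ≤ 3/4 := by
      rw [hβeq, abs_neg_one_pow_mul]
      have ht : ‖hcfQ ζ (m+2) * (q * ζ - p) - q * hcfL ζ (m+2)‖ ≤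
          ‖hcfQ ζ (m+2)‖ * A + aq * ‖hcfL ζ (m+2)‖ := by
        calc ‖hcfQ ζ (m+2) * (q * ζ - p) - q * hcfL ζ (m+2)‖ ≤
            ‖hcfQ ζ (m+2) * (q * ζ - p)‖ + ‖q * hcfL ζ (m+2)‖ :=
              norm_sub_le _ _
          _ = _ := by rw [norm_mul, norm_mul, ← hA_def, ← haq_def]
      -- |L_{m+2}| ≤ |L_{m+1}|  (since |z_{m+1}| ≥ 1)
      have hstep := abs_hcfL_step hζ (m+1)
      have hz1 : 1 ≤ ‖hcfZ ζ (m+1)‖ := by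
        have h := abs_sq_of_normSq (hcfZ_normSq_ge hζ m)
        nlinarith [norm_nonneg (hcfZ ζ (m+1))]
      have hL2le : ‖hcfL ζ (m+2)‖ ≤ ‖hcfL ζ (m+1)‖ := by
        nlinarith [norm_nonneg (hcfL ζ (m+2))]
      -- aq * |L_{m+2}| ≤ 1/4
      have hLn1' : ‖hcfL ζ (m+2)‖ ≤ 1/(4*aq) := hLn1
      have h4 : aq * ‖hcfL ζ (m+2)‖ ≤ 1/4 := by
        have h6 := mul_le_mul_of_nonneg_left hLn1' haq.le
        have heq : aq * (1/(4*aq)) = 1/4 := by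
          field_simp
        rw [heq] at h6
        linarith
      -- |Q| * A ≤ 1/2
      have h5 : ‖hcfQ ζ (m+2)‖ * A ≤ 1/2 := by
        have hA16 : A ≤ 1/(16*aq) := by
          rw [le_div_iff₀ (by positivity)]
          nlinarith
        have h7 := mul_le_mul hQ8 hA16 hA0 (by positivity)
        have heq : 8*aq * (1/(16*aq)) = 1/2 := by field_simp; ring
        rw [heq] at h7
        linarith
      linarith
    have hβ0 : β = 0 := by
      by_contra hβne
      have := gi_abs_ge_one hβgi hβne
      linarith
    rw [hβ0, zero_mul, add_zero] at hqid hlin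
    -- α ≠ 0, |α| ≥ 1
    have hαne : α ≠ 0 := by
      intro h0
      rw [h0, zero_mul] at hqid
      exact hq0 hqid.symm
    have hαgi : IsGaussianInt α := by
      rw [hα_def]
      exact gi_mul (gi_neg_one_pow _)
        (gi_sub (gi_mul hp (hcfP_gi (ζ := ζ) (m+1)).2) (gi_mul hq (hcfP_gi (ζ := ζ) (m+1)).1))
    have hα1 : 1 ≤ ‖α‖ := gi_abs_ge_one hαgi hαne
    -- A = |α| |L_{m+2}| ≥ |L_{m+2}|
    have hAeq : A = ‖α‖ * ‖hcfL ζ (m+2)‖ := by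
      rw [hA_def, ← hlin, norm_mul]
    have hAge : ‖hcfL ζ (m+2)‖ ≤ A := by
      rw [hAeq]
      nlinarith [norm_nonneg (hcfL ζ (m+2))]
    -- |L_{m+2}| * K ≥ |L_{m+1}|
    have hstep := abs_hcfL_step hζ (m+1)
    have hLK : ‖hcfL ζ (m+1)‖ ≤ ‖hcfL ζ (m+2)‖ * K := by
      have := mul_le_mul_of_nonneg_left (hzle (m+1)) (norm_nonneg (hcfL ζ (m+2)))
      linarith
    -- conclude 1 < A * (32 K aq)
    have hc1 := mul_le_mul_of_nonneg_left hLK (by positivity : (0:ℝ) ≤ 4*aq)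
    -- hc1 : 4aq * L_{m+1} ≤ 4aq * (L_{m+2} * K)
    have hchain : 1 < 4*aq * (‖hcfL ζ (m+2)‖ * K) := lt_of_lt_of_le hLn' hc1
    have e1 : 4*aq * (‖hcfL ζ (m+2)‖ * K) =
        (4*aq*K) * ‖hcfL ζ (m+2)‖ := by ring
    rw [e1] at hchain
    have hc2 : (4*aq*K) * ‖hcfL ζ (m+2)‖ ≤ (4*aq*K) * A :=
      mul_le_mul_of_nonneg_left hAge (by positivity)
    have hc3 : 1 < (4*aq*K) * A := lt_of_lt_of_le hchain hc2
    have e2 : A*(32*K*aq) = 8*((4*aq*K)*A) := by ring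
    rw [e2]
    linarith

end Directions
/-- `ζ ∈ ℂ \ ℚ(i)` is badly approximable iff its HCF partial quotients
are bounded. -/
theorem bad_iff_bounded_pq (ζ : ℂ) (hζ : ¬ IsGaussianRational ζ) :
    (∃ C : ℝ, 0 < C ∧ ∀ p q : ℂ, IsGaussianInt p → IsGaussianInt q → q ≠ 0 →
        C / ‖q‖ ^ 2 < ‖ζ - p / q‖) ↔
      (∃ M : ℝ, ∀ n : ℕ, ‖hcfA ζ n‖ ≤ M) := by
  constructor
  · rintro ⟨C, hC, hbad⟩
    exact ⟨max (‖hcfA ζ 0‖) (2/C + 1), forward_dir hζ C hC hbad⟩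
  · rintro ⟨M, hM⟩
    have hM0 : 0 ≤ M := le_trans (norm_nonneg _) (hM 0)
    exact ⟨1/(32*(M+1)), one_div_pos.mpr (by linarith), reverse_dir hζ M hM⟩
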